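/- Let X subset R^n be nonempty compact convex and, for each mu in R^m_+, let x(mu) = argmin_{x in X} L(x, mu) where L(x, mu) = f(x) + (alpha/2)||x||^2 + mu^T g(x), with f convex C^1, g convex C^1 componentwise, alpha > 0, and ||grad g(x)||_2 <= M_g on X (operator norm of the Jacobian). Then for any mu_1, mu_2 in R^m_+: (mu_2 - mu_1)^T (g(x(mu_1)) - g(x(mu_2))) >= (alpha/M_g^2) ||g(x(mu_1)) - g(x(mu_2))||^2, and ||mu_1 - mu_2|| >= (alpha/M_g) ||x(mu_1) - x(mu_2)||. -/

import Mathlib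

open scoped RealInnerProductSpace

lemma convexOn_finset_sum' {E : Type*} [AddCommMonoid E] [Module ℝ E] {ι : Type*}
    (s : Finset ι) (h : ι → E → ℝ)
    (hc : ∀ j, ConvexOn ℝ Set.univ (h j)) :
    ConvexOn ℝ Set.univ (fun x => ∑ j ∈ s, h j x) := by
  classical
  induction s using Finset.induction with
  | empty => simpa using convexOn_const 0 convex_univ
  | @insert a s hx ih =>
    simp_rw [Finset.sum_insert hx]
    exact (hc _).add ih

lemma strong_min_aux {E : Type*} [NormedAddCommGroup E] [InnerProductSpace ℝ E]
    {X : Set E} (hXconv : Convex ℝ X) {h : E → ℝ} (hconv : ConvexOn ℝ Set.univ h)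
    {α : ℝ} (hα : 0 < α) {x : E} (hx : x ∈ X)
    (hmin : ∀ y ∈ X, h x + α/2*‖x‖^2 ≤ h y + α/2*‖y‖^2)
    {y : E} (hy : y ∈ X) :
    h x + α/2*‖x‖^2 + α/2*‖x-y‖^2 ≤ h y + α/2*‖y‖^2 := by
  have key : ∀ t ∈ Set.Ioo (0:ℝ) 1,
      h x + α/2*‖x‖^2 + α/2*(1-t)*‖x-y‖^2 ≤ h y + α/2*‖y‖^2 := by
    intro t ht
    obtain ⟨ht0, ht1⟩ := ht
    set z := x + t • (y - x) with hz
    have hzX : z ∈ X := by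
      have := hXconv hx hy (le_of_lt (by linarith : (0:ℝ) < 1 - t)) ht0.le (by ring)
      simpa [hz, smul_sub, sub_smul] using by
        convert this using 1
        module
    have hmz := hmin z hzX
    have hnorm : ‖z‖^2 = ‖x‖^2 + 2*t*⟪x, y-x⟫ + t^2*‖y-x‖^2 := by
      rw [hz, norm_add_sq_real, real_inner_smul_right, norm_smul]
      simp [mul_pow, sq_abs]; ring
    have hny : ‖y‖^2 = ‖x‖^2 + 2*⟪x, y-x⟫ + ‖y-x‖^2 := by
      have : y = x + (y - x) := by abel
      rw [this, norm_add_sq_real]; simp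
    have hxy : ‖x - y‖ = ‖y - x‖ := norm_sub_rev x y
    have hconvz : h z ≤ (1-t) * h x + t * h y := by
      have hc := hconv.2 (Set.mem_univ x) (Set.mem_univ y)
        (le_of_lt (by linarith : (0:ℝ) < 1 - t)) ht0.le (by ring)
      have : (1-t) • x + t • y = z := by rw [hz]; module
      rw [this] at hc
      simpa using hc
    have h1 : t * h x ≤ t * (h y + α*⟪x,y-x⟫ + α/2*t*‖y-x‖^2) := by
      nlinarith [hmz, hconvz, hnorm]
    have h2 : h x ≤ h y + α*⟪x,y-x⟫ + α/2*t*‖y-x‖^2 :=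
      le_of_mul_le_mul_left h1 ht0
    rw [hxy]
    nlinarith [h2, hny]
  have hlim : Filter.Tendsto (fun t : ℝ => h x + α/2*‖x‖^2 + α/2*(1-t)*‖x-y‖^2)
      (nhdsWithin 0 (Set.Ioi (0:ℝ))) (nhds (h x + α/2*‖x‖^2 + α/2*‖x-y‖^2)) := by
    have hc : Continuous (fun t : ℝ => h x + α/2*‖x‖^2 + α/2*(1-t)*‖x-y‖^2) := by
      continuity
    have := (hc.tendsto 0).mono_left (nhdsWithin_le_nhds (s := Set.Ioi (0:ℝ)))
    simpa using this
  refine le_of_tendsto hlim ?_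
  filter_upwards [Ioo_mem_nhdsGT_of_mem (by norm_num : (0:ℝ) ∈ Set.Ico (0:ℝ) 1)]
    with t ht using key t ht

/-- cocoercivity-type lemma. With `x(μ) = argmin_{x ∈ X} L(x,μ)`,
`L(x,μ) = f(x) + (α/2)‖x‖² + ⟪μ, g(x)⟫`, `‖Dg(x)‖ ≤ M_g` on `X`, then for
`μ₁, μ₂ ∈ ℝᵐ₊`:
`⟪μ₂ - μ₁, g(x(μ₁)) - g(x(μ₂))⟫ ≥ (α/M_g²)‖g(x(μ₁)) - g(x(μ₂))‖²` and
`‖μ₁ - μ₂‖ ≥ (α/M_g)‖x(μ₁) - x(μ₂)‖`. -/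
theorem stmt15 (n m : ℕ) (X : Set (EuclideanSpace ℝ (Fin n)))
    (hXne : X.Nonempty) (hXcpt : IsCompact X) (hXconv : Convex ℝ X)
    (f : EuclideanSpace ℝ (Fin n) → ℝ)
    (hfconv : ConvexOn ℝ Set.univ f) (hf : ContDiff ℝ 1 f)
    (g : EuclideanSpace ℝ (Fin n) → EuclideanSpace ℝ (Fin m))
    (hgconv : ∀ j, ConvexOn ℝ Set.univ (fun x => g x j)) (hg : ContDiff ℝ 1 g)
    (α : ℝ) (hα : 0 < α) (Mg : ℝ) (hMg : 0 < Mg)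
    (hJac : ∀ x ∈ X, ‖fderiv ℝ g x‖ ≤ Mg)
    (xmu : EuclideanSpace ℝ (Fin m) → EuclideanSpace ℝ (Fin n))
    (hxmu : ∀ μ : EuclideanSpace ℝ (Fin m), (∀ j, 0 ≤ μ j) →
      xmu μ ∈ X ∧ ∀ y ∈ X,
        f (xmu μ) + α/2 * ‖xmu μ‖^2 + ⟪μ, g (xmu μ)⟫
          ≤ f y + α/2 * ‖y‖^2 + ⟪μ, g y⟫)
    (μ₁ μ₂ : EuclideanSpace ℝ (Fin m)) (hμ₁ : ∀ j, 0 ≤ μ₁ j) (hμ₂ : ∀ j, 0 ≤ μ₂ j) :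
    (α / Mg^2) * ‖g (xmu μ₁) - g (xmu μ₂)‖^2
        ≤ ⟪μ₂ - μ₁, g (xmu μ₁) - g (xmu μ₂)⟫ ∧
    (α / Mg) * ‖xmu μ₁ - xmu μ₂‖ ≤ ‖μ₁ - μ₂‖ := by
  set x₁ := xmu μ₁ with hx₁def
  set x₂ := xmu μ₂ with hx₂def
  obtain ⟨hx₁X, hmin₁⟩ := hxmu μ₁ hμ₁
  obtain ⟨hx₂X, hmin₂⟩ := hxmu μ₂ hμ₂
  -- convexity of z ↦ f z + ⟪μ, g z⟫ for μ ≥ 0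
  have hconvh : ∀ μ : EuclideanSpace ℝ (Fin m), (∀ j, 0 ≤ μ j) →
      ConvexOn ℝ Set.univ (fun z => f z + ⟪μ, g z⟫) := by
    intro μ hμ
    have heq : (fun z => ⟪μ, g z⟫) = fun z => ∑ j, μ j * g z j := by
      funext z
      simp [PiLp.inner_apply, RCLike.inner_apply]
      exact Finset.sum_congr rfl (fun _ _ => mul_comm _ _)
    have hsum : ConvexOn ℝ Set.univ (fun z => ∑ j, μ j * g z j) :=
      convexOn_finset_sum' Finset.univ (fun j z => μ j * g z j)
        (fun j => (hgconv j).smul (hμ j))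
    refine hfconv.add ?_
    rw [heq]; exact hsum
  -- strong convexity inequalities
  have hsm : ∀ (μ : EuclideanSpace ℝ (Fin m)) (hμ : ∀ j, 0 ≤ μ j) (y : EuclideanSpace ℝ (Fin n)),
      y ∈ X →
      f (xmu μ) + ⟪μ, g (xmu μ)⟫ + α/2*‖xmu μ‖^2 + α/2*‖xmu μ - y‖^2
        ≤ f y + ⟪μ, g y⟫ + α/2*‖y‖^2 := by
    intro μ hμ y hy
    have := strong_min_aux (h := fun z => f z + ⟪μ, g z⟫) hXconv (hconvh μ hμ) hα
      (hxmu μ hμ).1 (fun y hy => by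
        have := (hxmu μ hμ).2 y hy
        linarith) hy
    linarith
  have A1 := hsm μ₁ hμ₁ x₂ hx₂X
  have A2 := hsm μ₂ hμ₂ x₁ hx₁X
  have hnormsym : ‖x₂ - x₁‖ = ‖x₁ - x₂‖ := norm_sub_rev _ _
  have key : α * ‖x₁ - x₂‖^2 ≤ ⟪μ₂ - μ₁, g x₁ - g x₂⟫ := by
    have hexp : ⟪μ₂ - μ₁, g x₁ - g x₂⟫
        = ⟪μ₂, g x₁⟫ - ⟪μ₂, g x₂⟫ - ⟪μ₁, g x₁⟫ + ⟪μ₁, g x₂⟫ := by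
      rw [inner_sub_left, inner_sub_right, inner_sub_right]; ring
    rw [hexp] at *
    rw [hnormsym] at A2
    linarith
  -- Lipschitz bound
  have hLip : ‖g x₁ - g x₂‖ ≤ Mg * ‖x₁ - x₂‖ := by
    have := hXconv.norm_image_sub_le_of_norm_fderiv_le
      (f := g) (fun z _ => (hg.differentiable one_ne_zero).differentiableAt) hJac hx₂X hx₁X
    simpa using this
  have hgnn : (0:ℝ) ≤ ‖g x₁ - g x₂‖ := norm_nonneg _
  have hxnn : (0:ℝ) ≤ ‖x₁ - x₂‖ := norm_nonneg _
  constructor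
  · -- first inequality
    have h1 : ‖g x₁ - g x₂‖^2 ≤ Mg^2 * ‖x₁ - x₂‖^2 := by nlinarith
    have h2 : α / Mg^2 * ‖g x₁ - g x₂‖^2 ≤ α * ‖x₁ - x₂‖^2 := by
      rw [div_mul_eq_mul_div, div_le_iff₀ (by positivity)]
      nlinarith
    linarith
  · -- second inequality
    have hCS : ⟪μ₂ - μ₁, g x₁ - g x₂⟫ ≤ ‖μ₂ - μ₁‖ * ‖g x₁ - g x₂‖ :=
      real_inner_le_norm _ _
    have hμsym : ‖μ₂ - μ₁‖ = ‖μ₁ - μ₂‖ := norm_sub_rev _ _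
    have hμnn : (0:ℝ) ≤ ‖μ₁ - μ₂‖ := norm_nonneg _
    have hchain : α * ‖x₁ - x₂‖^2 ≤ ‖μ₁ - μ₂‖ * (Mg * ‖x₁ - x₂‖) := by
      calc α * ‖x₁ - x₂‖^2 ≤ ⟪μ₂ - μ₁, g x₁ - g x₂⟫ := key
        _ ≤ ‖μ₂ - μ₁‖ * ‖g x₁ - g x₂‖ := hCS
        _ ≤ ‖μ₁ - μ₂‖ * (Mg * ‖x₁ - x₂‖) := by
            rw [hμsym]
            exact mul_le_mul_of_nonneg_left hLip hμnn
    rcases eq_or_lt_of_le hxnn with h0 | h0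
    · rw [← h0]; simpa using hμnn
    · rw [div_mul_eq_mul_div, div_le_iff₀ hMg]
      have := (mul_le_mul_iff_of_pos_right h0).mp (by nlinarith : (α * ‖x₁ - x₂‖) * ‖x₁ - x₂‖ ≤ (‖μ₁ - μ₂‖ * Mg) * ‖x₁ - x₂‖)
      linarith
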